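/- Kraus-type decomposition of couplings (equation (eq:condA) in the proof of Proposition 2.3): let ρ, σ be density matrices of size n and let Π be a coupling between ρ and σ. Then there exist m : ℕ and matrices A₀, …, A_{m−1} : Matrix (Fin n) (Fin n) ℂ such that Π (i, j) (k, l) = ∑ t, (A_t) i j * conj((A_t) k l) for all i, j, k, l, and ∑ t, (A_t)ᴴ * A_t = ρ, and ∑ t, A_t * (A_t)ᴴ = σ. -/

import Mathlib

open Matrix
open scoped ComplexOrder

noncomputable section

/-- A density matrix: positive semidefinite with trace 1. -/
def IsDensity {ι : Type*} [Fintype ι] (ρ : Matrix ι ι ℂ) : Prop :=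
  ρ.PosSemidef ∧ ρ.trace = 1

/-- A coupling between the quantum states `ρ` and `σ`. -/
def IsCoupling {ι : Type*} [Fintype ι] (ρ σ : Matrix ι ι ℂ)
    (P : Matrix (ι × ι) (ι × ι) ℂ) : Prop :=
  P.PosSemidef ∧ P.trace = 1 ∧
  (∀ j l, ∑ i, P (i, j) (i, l) = ρ l j) ∧
  (∀ i k, ∑ j, P (i, j) (k, j) = σ i k)

/-- The cost operator `C = ∑ s, (Rₛ ⊗ I − I ⊗ Rₛᵀ)²` associated to a family of
Hermitian matrices. -/
def costOp {ι : Type*} [Fintype ι] [DecidableEq ι] {κ : Type*} [Fintype κ]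
    (R : κ → Matrix ι ι ℂ) : Matrix (ι × ι) (ι × ι) ℂ :=
  ∑ s, (Matrix.of (fun p q : ι × ι =>
      R s p.1 q.1 * (if p.2 = q.2 then 1 else 0)
      - (if p.1 = q.1 then 1 else 0) * R s q.2 p.2)) ^ 2

/-- **Kraus-type decomposition of couplings** (equation (eq:condA) in the proof of
Proposition 2.3). -/
theorem coupling_kraus_decomposition {n : ℕ}
    (ρ σ : Matrix (Fin n) (Fin n) ℂ) (hρ : IsDensity ρ) (hσ : IsDensity σ)
    (P : Matrix (Fin n × Fin n) (Fin n × Fin n) ℂ) (hP : IsCoupling ρ σ P) :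
    ∃ (m : ℕ) (A : Fin m → Matrix (Fin n) (Fin n) ℂ),
      (∀ i j k l, P (i, j) (k, l) = ∑ t, A t i j * (starRingEnd ℂ) (A t k l)) ∧
      (∑ t, (A t)ᴴ * A t = ρ) ∧
      (∑ t, A t * (A t)ᴴ = σ) := by
  obtain ⟨hpsd, -, hρm, hσm⟩ := hP
  open scoped MatrixOrder in
  set S := CFC.sqrt P with hS
  open scoped MatrixOrder in
  have hSH : Sᴴ = S := (Matrix.nonneg_iff_posSemidef.mp (CFC.sqrt_nonneg P)).isHermitian
  open scoped MatrixOrder in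
  have hPSS : S * S = P := CFC.sqrt_mul_sqrt_self P (Matrix.nonneg_iff_posSemidef.mpr hpsd)
  have key : ∀ p q, P p q = ∑ t : Fin n × Fin n,
      (starRingEnd ℂ) (S t p) * S t q := by
    intro p q
    rw [← hPSS, Matrix.mul_apply]
    refine Finset.sum_congr rfl fun t _ => ?_
    have : S p t = (starRingEnd ℂ) (S t p) := by
      conv_lhs => rw [← hSH]
      simp [Matrix.conjTranspose_apply]
    rw [this]
  refine ⟨n * n, fun u => Matrix.of fun i j =>
      (starRingEnd ℂ) (S (finProdFinEquiv.symm u) (i, j)), ?_, ?_, ?_⟩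
  · intro i j k l
    rw [key]
    rw [← Equiv.sum_comp finProdFinEquiv.symm
      (fun t => (starRingEnd ℂ) (S t (i, j)) * S t (k, l))]
    simp [mul_comm]
  · ext l j
    rw [← hρm j l, Matrix.sum_apply]
    refine (Fintype.sum_equiv finProdFinEquiv.symm _
      (fun t => ((Matrix.of fun i j => (starRingEnd ℂ) (S t (i, j)))ᴴ *
        (Matrix.of fun i j => (starRingEnd ℂ) (S t (i, j)))) l j)
      fun c => rfl).trans ?_
    simp only [Matrix.mul_apply, Matrix.conjTranspose_apply, Matrix.of_apply]
    rw [Finset.sum_comm]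
    refine Finset.sum_congr rfl fun i _ => ?_
    rw [key]
    refine Finset.sum_congr rfl fun t _ => ?_
    simp [mul_comm]
  · ext i k
    rw [← hσm i k, Matrix.sum_apply]
    refine (Fintype.sum_equiv finProdFinEquiv.symm _
      (fun t => ((Matrix.of fun i j => (starRingEnd ℂ) (S t (i, j))) *
        (Matrix.of fun i j => (starRingEnd ℂ) (S t (i, j)))ᴴ) i k)
      fun c => rfl).trans ?_
    simp only [Matrix.mul_apply, Matrix.conjTranspose_apply, Matrix.of_apply]
    rw [Finset.sum_comm]
    refine Finset.sum_congr rfl fun j _ => ?_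
    rw [key]
    refine Finset.sum_congr rfl fun t _ => ?_
    simp [mul_comm]
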